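/- (Large prior variance limit of the Gibbs estimator.) In the setting of the Gibbs estimator learning curve, in the regime α₀ > 1 and α_min = min{α₁,…,α_L} > 1, consider the Gibbs estimator with weight covariances scaled as τ_ℓ Σ̃_ℓ for ℓ = 1,…,L with τ_ℓ > 0. Then lim_{τ₁,…,τ_L → ∞} ε_BRF / ∏_{ℓ=1}^{L} τ_ℓ = ∏_{ℓ=0}^{L} (κ_ℓ/α_ℓ), and if each limiting spectral distribution of Σ̃_ℓ has finite mean E_{σ̃_ℓ}[σ̃_ℓ], this limit is bounded above by (κ₀/α₀) ς² ∏_{ℓ=1}^{L} (1 − 1/α_ℓ), where ς² = ∏_{ℓ=1}^{L} E_{σ̃_ℓ}[σ̃_ℓ] and the κ_ℓ are defined with respect to the un-scaled covariances Σ̃_ℓ. -/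

import Mathlib

open MeasureTheory Filter Topology


lemma gibbs_layer_bound (ν : Measure ℝ) [IsProbabilityMeasure ν]
    (hpos : ∀ᵐ σ ∂ν, 0 < σ) (κ α : ℝ) (hκ : 0 < κ) (hα : 1 < α)
    (hfix : ∫ σ, σ / (κ + σ) ∂ν = 1 / α)
    (hInt : Integrable (fun σ : ℝ => σ) ν) :
    κ / α ≤ (∫ σ, σ ∂ν) * (1 - 1 / α) := by
  have hα0 : (0:ℝ) < α := lt_trans one_pos hα
  have hc0 : (0:ℝ) < 1 - 1 / α := by
    have : 1 / α < 1 := by rw [div_lt_one hα0]; exact hα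
    linarith
  set c : ℝ := 1 - 1 / α with hcdef
  set s : ℝ := κ * (1 - c) / c with hsdef
  -- measurability
  have m1 : AEStronglyMeasurable (fun σ : ℝ => κ * σ / (κ + σ)) ν :=
    ((measurable_const.mul measurable_id).div
      (measurable_const.add measurable_id)).aestronglyMeasurable
  have m2 : AEStronglyMeasurable (fun σ : ℝ => κ / (κ + σ)) ν :=
    (measurable_const.div (measurable_const.add measurable_id)).aestronglyMeasurable
  have m3 : AEStronglyMeasurable (fun σ : ℝ => σ / (κ + σ)) ν :=
    (measurable_id.div (measurable_const.add measurable_id)).aestronglyMeasurable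
  -- integrability
  have i1 : Integrable (fun σ : ℝ => κ * σ / (κ + σ)) ν := by
    refine (integrable_const κ).mono' m1 ?_
    filter_upwards [hpos] with σ hσ
    have hd : (0:ℝ) < κ + σ := by linarith
    rw [Real.norm_eq_abs, abs_of_nonneg (by positivity), div_le_iff₀ hd]
    nlinarith
  have i2 : Integrable (fun σ : ℝ => κ / (κ + σ)) ν := by
    refine (integrable_const (1:ℝ)).mono' m2 ?_
    filter_upwards [hpos] with σ hσ
    have hd : (0:ℝ) < κ + σ := by linarith
    rw [Real.norm_eq_abs, abs_of_nonneg (by positivity), div_le_one hd]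
    linarith
  have i3 : Integrable (fun σ : ℝ => σ / (κ + σ)) ν := by
    refine (integrable_const (1:ℝ)).mono' m3 ?_
    filter_upwards [hpos] with σ hσ
    have hd : (0:ℝ) < κ + σ := by linarith
    rw [Real.norm_eq_abs, abs_of_nonneg (by positivity), div_le_one hd]
    linarith
  -- ∫ κ/(κ+σ) = c
  have hIκ : ∫ σ, κ / (κ + σ) ∂ν = c := by
    have heq : (fun σ : ℝ => κ / (κ + σ)) =ᵐ[ν] fun σ => 1 - σ / (κ + σ) := by
      filter_upwards [hpos] with σ hσ
      have hd : (κ + σ) ≠ 0 := by positivity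
      field_simp
      ring
    rw [integral_congr_ae heq, integral_sub (integrable_const 1) i3, hfix]
    simp [hcdef]
  -- pointwise inequality
  have hpt : ∀ᵐ σ ∂ν, κ * σ / (κ + σ) ≤ c * σ + s * (κ / (κ + σ) - c) := by
    filter_upwards [hpos] with σ hσ
    have hd : (0:ℝ) < κ + σ := by linarith
    have hcne : c ≠ 0 := ne_of_gt hc0
    have heq : c * σ + s * (κ / (κ + σ) - c) - κ * σ / (κ + σ)
        = c * (s - σ) ^ 2 / (κ + σ) := by
      rw [hsdef]; field_simp; ring
    have h0 : 0 ≤ c * (s - σ) ^ 2 / (κ + σ) := by positivity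
    linarith
  have i4 : Integrable (fun σ : ℝ => κ / (κ + σ) - c) ν := i2.sub (integrable_const c)
  have iR : Integrable (fun σ : ℝ => c * σ + s * (κ / (κ + σ) - c)) ν :=
    (hInt.const_mul c).add (i4.const_mul s)
  have hmono := integral_mono_ae i1 iR hpt
  have hL : ∫ σ, κ * σ / (κ + σ) ∂ν = κ / α := by
    simp_rw [mul_div_assoc]
    rw [integral_const_mul, hfix, mul_one_div]
  have hR : ∫ σ, (c * σ + s * (κ / (κ + σ) - c)) ∂ν = c * ∫ σ, σ ∂ν := by
    rw [integral_add (hInt.const_mul c) (i4.const_mul s),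
      integral_const_mul, integral_const_mul, integral_sub i2 (integrable_const c), hIκ,
      integral_const]
    simp
  rw [hL, hR] at hmono
  linarith [hmono, mul_comm c (∫ σ, σ ∂ν)]


/-- Lemma 4, large-prior-variance limit of the Gibbs estimator.  In the
regime `α₀ > 1`, `min{α₁,…,α_L} > 1` of the Gibbs estimator learning curve, with weight
covariances scaled as `τ_ℓ Σ̃_ℓ` for `ℓ = 1,…,L` (so that `κ_ℓ ↦ τ_ℓ κ_ℓ` while
`ε_ridgeless` is unchanged), one has
`lim_{τ₁,…,τ_L → ∞} ε_BRF(τ) / ∏ τ_ℓ = ∏_{ℓ=0}^L κ_ℓ/α_ℓ`, and if the limiting spectral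
distributions have finite means then this limit is bounded above by
`(κ₀/α₀) ς² ∏_{ℓ=1}^L (1 − 1/α_ℓ)` with `ς² = ∏_{ℓ=1}^L E[σ̃_ℓ]`, the `κ_ℓ` being defined
through the unscaled covariances.  (The coordinate `i : Fin L` stands for layer `ℓ = i+1`.) -/
theorem gibbs_large_prior_variance
    (L : ℕ) (hL : 1 ≤ L) (α : ℕ → ℝ)
    -- overparameterized regime: α₀ > 1 and all hidden-layer ratios exceed one
    (hα : ∀ ℓ ≤ L, 1 < α ℓ)
    -- limiting spectral distributions of the unscaled covariances Σ̃₀, Σ̃₁, …, Σ̃_L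
    (ν : ℕ → Measure ℝ) (hprob : ∀ ℓ ≤ L, IsProbabilityMeasure (ν ℓ))
    (hpos : ∀ ℓ ≤ L, ∀ᵐ σ ∂ν ℓ, 0 < σ)
    -- κ_ℓ > 0 is the solution of E[σ̃_ℓ/(κ_ℓ+σ̃_ℓ)] = 1/α_ℓ for the unscaled covariances
    (κ : ℕ → ℝ)
    (hκ : ∀ ℓ ≤ L, 0 < κ ℓ ∧ ∫ σ, σ / (κ ℓ + σ) ∂ν ℓ = 1 / α ℓ)
    -- the Gibbs learning curve for the scaled covariances τ_ℓ Σ̃_ℓ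
    (εridge : ℝ) (εBRF : (Fin L → ℝ) → ℝ)
    (hBRF : ∀ τ : Fin L → ℝ, (∀ i, 0 < τ i) →
      εBRF τ = εridge +
        (κ 0 / α 0) * ∏ i : Fin L, (τ i * κ (i.val + 1) / α (i.val + 1))) :
    Tendsto (fun τ : Fin L → ℝ => εBRF τ / ∏ i : Fin L, τ i) atTop
      (nhds ((κ 0 / α 0) * ∏ i : Fin L, κ (i.val + 1) / α (i.val + 1))) ∧
    ((∀ ℓ, 1 ≤ ℓ → ℓ ≤ L → Integrable (fun σ : ℝ => σ) (ν ℓ)) →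
      (κ 0 / α 0) * ∏ i : Fin L, κ (i.val + 1) / α (i.val + 1) ≤
        (κ 0 / α 0) * (∏ i : Fin L, ∫ σ, σ ∂ν (i.val + 1)) *
          ∏ i : Fin L, (1 - 1 / α (i.val + 1))) := by
  constructor
  · -- Part 1: the limit
    have hprodTop : Tendsto (fun τ : Fin L → ℝ => ∏ i : Fin L, τ i) atTop atTop := by
      rw [tendsto_atTop]
      intro b
      filter_upwards [eventually_ge_atTop (fun _ : Fin L => max b 1)] with τ hτ
      calc b ≤ max b 1 := le_max_left _ _
        _ ≤ (max b 1) ^ L := le_self_pow₀ (le_max_right _ _) (by omega)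
        _ = ∏ _i : Fin L, max b 1 := by
            rw [Finset.prod_const, Finset.card_univ, Fintype.card_fin]
        _ ≤ ∏ i : Fin L, τ i :=
            Finset.prod_le_prod (fun i _ => le_trans zero_le_one (le_max_right _ _))
              (fun i _ => hτ i)
    have hev : ∀ᶠ τ : Fin L → ℝ in atTop,
        εBRF τ / ∏ i : Fin L, τ i
          = εridge / ∏ i : Fin L, τ i
            + (κ 0 / α 0) * ∏ i : Fin L, κ (i.val + 1) / α (i.val + 1) := by
      filter_upwards [eventually_ge_atTop (fun _ : Fin L => (1:ℝ))] with τ hτ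
      have hτpos : ∀ i, 0 < τ i := fun i => lt_of_lt_of_le one_pos (hτ i)
      have hprodpos : 0 < ∏ i : Fin L, τ i := Finset.prod_pos fun i _ => hτpos i
      have hne : (∏ i : Fin L, τ i) ≠ 0 := ne_of_gt hprodpos
      rw [hBRF τ hτpos]
      have hsplit : ∏ i : Fin L, (τ i * κ (i.val + 1) / α (i.val + 1))
          = (∏ i : Fin L, τ i) * ∏ i : Fin L, κ (i.val + 1) / α (i.val + 1) := by
        rw [← Finset.prod_mul_distrib]
        exact Finset.prod_congr rfl fun i _ => mul_div_assoc _ _ _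
      rw [hsplit]
      field_simp
    have hlim : Tendsto
        (fun τ : Fin L → ℝ => εridge / ∏ i : Fin L, τ i
          + (κ 0 / α 0) * ∏ i : Fin L, κ (i.val + 1) / α (i.val + 1)) atTop
        (nhds ((κ 0 / α 0) * ∏ i : Fin L, κ (i.val + 1) / α (i.val + 1))) := by
      have h1 : Tendsto (fun τ : Fin L → ℝ => εridge / ∏ i : Fin L, τ i) atTop
          (nhds 0) := tendsto_const_nhds.div_atTop hprodTop
      have := h1.add (tendsto_const_nhds
        (x := (κ 0 / α 0) * ∏ i : Fin L, κ (i.val + 1) / α (i.val + 1))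
        (f := atTop (α := Fin L → ℝ)))
      simpa using this
    exact hlim.congr' (hev.mono fun τ h => h.symm)
  · -- Part 2: the upper bound
    intro hInt
    have hbound : ∀ i : Fin L, κ (i.val + 1) / α (i.val + 1)
        ≤ (∫ σ, σ ∂ν (i.val + 1)) * (1 - 1 / α (i.val + 1)) := by
      intro i
      have hiL : i.val + 1 ≤ L := i.isLt
      haveI := hprob (i.val + 1) hiL
      exact gibbs_layer_bound (ν (i.val + 1)) (hpos (i.val + 1) hiL)
        (κ (i.val + 1)) (α (i.val + 1)) (hκ (i.val + 1) hiL).1 (hα (i.val + 1) hiL)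
        (hκ (i.val + 1) hiL).2 (hInt (i.val + 1) (Nat.le_add_left 1 _) hiL)
    have hprodle : ∏ i : Fin L, κ (i.val + 1) / α (i.val + 1)
        ≤ ∏ i : Fin L, (∫ σ, σ ∂ν (i.val + 1)) * (1 - 1 / α (i.val + 1)) := by
      refine Finset.prod_le_prod (fun i _ => ?_) (fun i _ => hbound i)
      have hiL : i.val + 1 ≤ L := i.isLt
      exact div_nonneg (hκ (i.val + 1) hiL).1.le
        (le_trans zero_le_one (hα (i.val + 1) hiL).le)
    have h00 : 0 ≤ κ 0 / α 0 :=
      div_nonneg (hκ 0 (Nat.zero_le L)).1.le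
        (le_trans zero_le_one (hα 0 (Nat.zero_le L)).le)
    calc (κ 0 / α 0) * ∏ i : Fin L, κ (i.val + 1) / α (i.val + 1)
        ≤ (κ 0 / α 0) * ∏ i : Fin L,
            (∫ σ, σ ∂ν (i.val + 1)) * (1 - 1 / α (i.val + 1)) :=
          mul_le_mul_of_nonneg_left hprodle h00
      _ = (κ 0 / α 0) * (∏ i : Fin L, ∫ σ, σ ∂ν (i.val + 1)) *
            ∏ i : Fin L, (1 - 1 / α (i.val + 1)) := by
          rw [Finset.prod_mul_distrib, mul_assoc]
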